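/- For the partition (2,1,…,1) ⊢ n, the divisibility condition defining the integral shuffle algebra 𝒮 implies, after tensoring with ℚ(q₁,q₂), the wheel conditions: R(x, xq₂, xq₁q₂, z₄,…,z_n) = 0 and R(x, xq₂, xq₁^{-1}, z₄,…,z_n) = 0 for any R ∈ 𝒮 ⊗ ℚ(q₁,q₂) in n ≥ 3 variables. -/

import Mathlib

/- Framework: we work inside the field FF of rational functions over ℤ in
countably many variables q₁, q₂, z₀, z₁, z₂, … (the fraction field of
MvPolynomial ℕ ℤ).  A Laurent polynomial R(z₁,…,z_n) over ℤ[q₁^±,q₂^±] is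
encoded by its finitely supported coefficient function
c : (Fin n → ℤ) →₀ FF (with values in the Laurent subring ℤ[q₁^±,q₂^±]),
and `evalC c w` is its value ∑_m c_m ∏ w_i^{m_i} at a point w.  Since the z_i
are algebraically independent, equalities of such expressions at the generic
point w = (z₀,…,z_{n-1}) are equalities of rational functions. -/

noncomputable section

abbrev FF : Type := FractionRing (MvPolynomial ℕ ℤ)

noncomputable def q₁ : FF := algebraMap (MvPolynomial ℕ ℤ) FF (MvPolynomial.X 0)
noncomputable def q₂ : FF := algebraMap (MvPolynomial ℕ ℤ) FF (MvPolynomial.X 1)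
/-- the generic variables z_i (also used as the variables x_i of the
specializations in Definition `SatisfiesDiv`) -/
noncomputable def zz (i : ℕ) : FF := algebraMap (MvPolynomial ℕ ℤ) FF (MvPolynomial.X (i + 2))
noncomputable def q₃ : FF := (q₁ * q₂)⁻¹

noncomputable def zeta (x : FF) : FF :=
  (1 - x * q₁) * (1 - x * q₂) * (1 - q₁ * q₂ / x) / (1 - x)

/-- the Laurent polynomial subring ℤ[q₁^{±1},q₂^{±1}] ⊆ FF -/
noncomputable def Lq : Subring FF := Subring.closure {q₁, q₁⁻¹, q₂, q₂⁻¹}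

/-- the Laurent polynomial subring ℤ[q₁^{±1},q₂^{±1}][x₁^{±1},…,x_k^{±1}] ⊆ FF,
where x_i := zz i -/
noncomputable def Lqx (k : ℕ) : Subring FF :=
  Subring.closure ({q₁, q₁⁻¹, q₂, q₂⁻¹} ∪ (Set.range fun i : Fin k => zz i)
    ∪ (Set.range fun i : Fin k => (zz i)⁻¹))

/-- value of the Laurent polynomial with coefficients c at the point w -/
noncomputable def evalC {n : ℕ} (c : (Fin n → ℤ) →₀ FF) (w : Fin n → FF) : FF :=
  ∑ m ∈ c.support, c m * ∏ i, w i ^ (m i)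

/-- the specialization point (x₁, x₁q₂, …, x₁q₂^{n₁-1}, …, x_k, …, x_kq₂^{n_k-1})
attached to a partition (n₁,…,n_k), with x_i := zz i -/
noncomputable def specTuple {n : ℕ} (k : ℕ) (nn : Fin k → ℕ) : Fin n → FF :=
  fun j => (((List.finRange k).flatMap fun i =>
    (List.range (nn i)).map fun s => zz i * q₂ ^ s).getD j 1)

/-- the divisor (eqn "divisible by") attached to a partition (n₁ ≥ … ≥ n_k) -/
noncomputable def divisor (k : ℕ) (nn : Fin k → ℕ) : FF :=
  (∏ i : Fin k, ((1 - q₂) ^ (nn i) *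
      ∏ s ∈ Finset.Icc 1 (nn i - 1), zeta (q₂ ^ s) ^ (nn i - s))) *
  ∏ i : Fin k, ∏ j ∈ Finset.univ.filter (fun j : Fin k => i < j),
    ((∏ a ∈ Finset.Icc (1 : ℤ) ((nn i : ℤ) - 1), ∏ b ∈ Finset.Icc (0 : ℤ) ((nn j : ℤ) - 1),
        (zz i * q₁ - zz j * q₂ ^ (b - a))) *
     (∏ a ∈ Finset.Icc (1 : ℤ) ((nn i : ℤ) - 1), ∏ b ∈ Finset.Icc (0 : ℤ) ((nn j : ℤ) - 1),
        (zz j * q₁ - zz i * q₂ ^ (a - b - 1))))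

/-- coefficients lie in ℤ[q₁^{±1},q₂^{±1}] -/
def HasLqCoeffs {n : ℕ} (c : (Fin n → ℤ) →₀ FF) : Prop := ∀ m ∈ c.support, c m ∈ Lq

/-- the Laurent polynomial is symmetric in z₁,…,z_n -/
def IsSymmC {n : ℕ} (c : (Fin n → ℤ) →₀ FF) : Prop :=
  ∀ σ : Equiv.Perm (Fin n), ∀ m : Fin n → ℤ, c (m ∘ σ) = c m

/-- the divisibility conditions of Definition "shuffle": for every partition
(n₁ ≥ … ≥ n_k) ⊢ n, the specialization is divisible by `divisor` in
ℤ[q₁^{±1},q₂^{±1}][x₁^{±1},…,x_k^{±1}] -/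
def SatisfiesDiv {n : ℕ} (c : (Fin n → ℤ) →₀ FF) : Prop :=
  ∀ (k : ℕ) (nn : Fin k → ℕ), (∀ i, 0 < nn i) → Antitone nn → (∑ i, nn i) = n →
    ∃ g ∈ Lqx k, evalC c (specTuple k nn) = divisor k nn * g

/-- membership in the integral shuffle algebra 𝒮 (in degree n) -/
def InS {n : ℕ} (c : (Fin n → ℤ) →₀ FF) : Prop :=
  HasLqCoeffs c ∧ IsSymmC c ∧ SatisfiesDiv c


/- STATEMENT 9: over ℚ(q₁,q₂) (i.e. for 𝒮 ⊗ ℚ(q₁,q₂)), the divisibility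
conditions defining 𝒮 imply the wheel conditions
  R(x, xq₂, xq₁q₂, z₄,…,z_n) = 0 and R(x, xq₂, xq₁⁻¹, z₄,…,z_n) = 0.
An element of 𝒮 ⊗ ℚ(q₁,q₂) is a symmetric Laurent polynomial with coefficients
in the subfield ℚ(q₁,q₂) ⊆ FF whose specializations at the partitions
(n₁ ≥ … ≥ n_k) ⊢ n are divisible by `divisor` in the Laurent polynomial ring
ℚ(q₁,q₂)[x₁^{±1},…,x_k^{±1}].  The wheel vanishings are stated at the generic
point x = z₀, (z₄,…,z_n) = (z₃,…,z_{n-1}). -/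

/-- the subfield ℚ(q₁,q₂) ⊆ FF -/
noncomputable def K0 : Subfield FF := Subfield.closure {q₁, q₂}

/-- the Laurent polynomial ring ℚ(q₁,q₂)[x₁^{±1},…,x_k^{±1}] ⊆ FF -/
noncomputable def Kx (k : ℕ) : Subring FF :=
  Subring.closure ((K0 : Set FF) ∪ (Set.range fun i : Fin k => zz i)
    ∪ (Set.range fun i : Fin k => (zz i)⁻¹))

set_option synthInstance.maxHeartbeats 1000000
set_option maxHeartbeats 1000000
set_option linter.deprecated false

-- basic nonvanishing
lemma am_inj : Function.Injective (algebraMap (MvPolynomial ℕ ℤ) FF) :=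
  IsFractionRing.injective _ _

lemma am_ne {p : MvPolynomial ℕ ℤ} (hp : p ≠ 0) : algebraMap (MvPolynomial ℕ ℤ) FF p ≠ 0 := by
  intro h
  exact hp (am_inj (by simpa using h))

lemma q₁_ne : q₁ ≠ 0 := am_ne (MvPolynomial.X_ne_zero _)
lemma q₂_ne : q₂ ≠ 0 := am_ne (MvPolynomial.X_ne_zero _)
lemma zz_ne (i : ℕ) : zz i ≠ 0 := am_ne (MvPolynomial.X_ne_zero _)

noncomputable def Subt (t : FF) : ℕ → FF := fun k =>
  if k = 0 then q₁ else if k = 1 then q₂ else if k = 2 then zz 0 else if k = 3 then t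
  else zz (k - 1)

lemma Subt_ne {t : FF} (ht : t ≠ 0) (k : ℕ) : Subt t k ≠ 0 := by
  unfold Subt
  split_ifs <;> first | exact q₁_ne | exact q₂_ne | exact zz_ne _ | exact ht

noncomputable def psi (t : FF) (p : MvPolynomial ℕ ℤ) : FF := MvPolynomial.aeval (Subt t) p

lemma psi_mul (t : FF) (p q : MvPolynomial ℕ ℤ) : psi t (p * q) = psi t p * psi t q := by
  simp [psi]
lemma psi_add (t : FF) (p q : MvPolynomial ℕ ℤ) : psi t (p + q) = psi t p + psi t q :=
  map_add (MvPolynomial.aeval (Subt t)) p q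
lemma psi_one (t : FF) : psi t 1 = 1 := by simp [psi]
lemma psi_zero (t : FF) : psi t 0 = 0 := by simp [psi]
lemma psi_neg (t : FF) (p : MvPolynomial ℕ ℤ) : psi t (-p) = -psi t p := by simp [psi]
lemma psi_X (t : FF) (k : ℕ) : psi t (MvPolynomial.X k) = Subt t k := by simp [psi]

def Good (t x y : FF) : Prop :=
  ∃ p s : MvPolynomial ℕ ℤ, psi t s ≠ 0 ∧
    x * algebraMap (MvPolynomial ℕ ℤ) FF s = algebraMap (MvPolynomial ℕ ℤ) FF p ∧
    y * psi t s = psi t p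

lemma good_base (t : FF) (p : MvPolynomial ℕ ℤ) :
    Good t (algebraMap (MvPolynomial ℕ ℤ) FF p) (psi t p) :=
  ⟨p, 1, by simp [psi_one], by simp, by simp [psi_one]⟩

lemma good_unique {t x y₁ y₂ : FF} (h₁ : Good t x y₁) (h₂ : Good t x y₂) : y₁ = y₂ := by
  obtain ⟨p₁, s₁, hs₁, ha₁, hb₁⟩ := h₁
  obtain ⟨p₂, s₂, hs₂, ha₂, hb₂⟩ := h₂
  have hP : p₁ * s₂ = p₂ * s₁ := by
    apply am_inj
    rw [map_mul, map_mul, ← ha₁, ← ha₂]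
    ring
  have hψ : psi t p₁ * psi t s₂ = psi t p₂ * psi t s₁ := by
    rw [← psi_mul, ← psi_mul, hP]
  have : y₁ * (psi t s₁ * psi t s₂) = y₂ * (psi t s₁ * psi t s₂) := by
    calc y₁ * (psi t s₁ * psi t s₂) = (y₁ * psi t s₁) * psi t s₂ := by ring
    _ = (y₂ * psi t s₂) * psi t s₁ := by rw [hb₁, hb₂, hψ]
    _ = y₂ * (psi t s₁ * psi t s₂) := by ring
  exact mul_right_cancel₀ (mul_ne_zero hs₁ hs₂) this

lemma good_zero (t : FF) : Good t 0 0 := ⟨0, 1, by simp [psi_one], by simp, by simp [psi_zero, psi_one]⟩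
lemma good_one (t : FF) : Good t 1 1 := ⟨1, 1, by simp [psi_one], by simp, by simp [psi_one]⟩

lemma good_add {t x₁ x₂ y₁ y₂ : FF} (h₁ : Good t x₁ y₁) (h₂ : Good t x₂ y₂) :
    Good t (x₁ + x₂) (y₁ + y₂) := by
  obtain ⟨p₁, s₁, hs₁, ha₁, hb₁⟩ := h₁
  obtain ⟨p₂, s₂, hs₂, ha₂, hb₂⟩ := h₂
  refine ⟨p₁ * s₂ + p₂ * s₁, s₁ * s₂, by rw [psi_mul]; exact mul_ne_zero hs₁ hs₂, ?_, ?_⟩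
  · rw [map_add, map_mul, map_mul, map_mul]
    linear_combination (algebraMap (MvPolynomial ℕ ℤ) FF s₂) * ha₁ +
      (algebraMap (MvPolynomial ℕ ℤ) FF s₁) * ha₂
  · rw [psi_add, psi_mul, psi_mul, psi_mul]
    linear_combination (psi t s₂) * hb₁ + (psi t s₁) * hb₂

lemma good_mul {t x₁ x₂ y₁ y₂ : FF} (h₁ : Good t x₁ y₁) (h₂ : Good t x₂ y₂) :
    Good t (x₁ * x₂) (y₁ * y₂) := by
  obtain ⟨p₁, s₁, hs₁, ha₁, hb₁⟩ := h₁
  obtain ⟨p₂, s₂, hs₂, ha₂, hb₂⟩ := h₂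
  refine ⟨p₁ * p₂, s₁ * s₂, by rw [psi_mul]; exact mul_ne_zero hs₁ hs₂, ?_, ?_⟩
  · rw [map_mul, map_mul]
    linear_combination (x₂ * algebraMap (MvPolynomial ℕ ℤ) FF s₂) * ha₁ +
      (algebraMap (MvPolynomial ℕ ℤ) FF p₁) * ha₂
  · rw [psi_mul, psi_mul]
    linear_combination (y₂ * psi t s₂) * hb₁ + (psi t p₁) * hb₂

lemma good_neg {t x y : FF} (h : Good t x y) : Good t (-x) (-y) := by
  obtain ⟨p, s, hs, ha, hb⟩ := h
  exact ⟨-p, s, hs, by rw [map_neg]; linear_combination -ha, by rw [psi_neg]; linear_combination -hb⟩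

lemma good_sub {t x₁ x₂ y₁ y₂ : FF} (h₁ : Good t x₁ y₁) (h₂ : Good t x₂ y₂) :
    Good t (x₁ - x₂) (y₁ - y₂) := by
  rw [sub_eq_add_neg, sub_eq_add_neg]; exact good_add h₁ (good_neg h₂)

lemma good_zero_of {t x y : FF} (h : Good t x y) (hx : x = 0) : y = 0 :=
  good_unique (hx ▸ h) (good_zero t)

lemma good_inv {t x y : FF} (h : Good t x y) (hxy : x ≠ 0 → y ≠ 0) : Good t x⁻¹ y⁻¹ := by
  by_cases hx : x = 0
  · have hy : y = 0 := good_zero_of h hx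
    rw [hx, hy, inv_zero]; exact good_zero t
  · have hy : y ≠ 0 := hxy hx
    obtain ⟨p, s, hs, ha, hb⟩ := h
    have hψp : psi t p ≠ 0 := by rw [← hb]; exact mul_ne_zero hy hs
    refine ⟨s, p, hψp, ?_, ?_⟩
    · rw [← ha]; field_simp
    · rw [← hb]; field_simp

lemma good_pow {t x y : FF} (h : Good t x y) (k : ℕ) : Good t (x ^ k) (y ^ k) := by
  induction k with
  | zero => simpa using good_one t
  | succ k ih => rw [pow_succ, pow_succ]; exact good_mul ih h

lemma good_zpow {t x y : FF} (h : Good t x y) (hy : y ≠ 0) (k : ℤ) : Good t (x ^ k) (y ^ k) := by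
  rcases k with k | k
  · simpa using good_pow h k
  · rw [zpow_negSucc, zpow_negSucc]
    exact good_inv (good_pow h (k+1)) (fun _ => pow_ne_zero _ hy)

lemma good_div {t x₁ x₂ y₁ y₂ : FF} (h₁ : Good t x₁ y₁) (h₂ : Good t x₂ y₂)
    (hxy : x₂ ≠ 0 → y₂ ≠ 0) : Good t (x₁ / x₂) (y₁ / y₂) := by
  rw [div_eq_mul_inv, div_eq_mul_inv]; exact good_mul h₁ (good_inv h₂ hxy)

lemma good_prod {t : FF} {ι : Type*} (s : Finset ι) (f g : ι → FF)
    (h : ∀ i ∈ s, Good t (f i) (g i)) :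
    Good t (∏ i ∈ s, f i) (∏ i ∈ s, g i) := by
  induction s using Finset.cons_induction with
  | empty => simpa using good_one t
  | cons a s ha ih =>
    rw [Finset.prod_cons, Finset.prod_cons]
    exact good_mul (h a (Finset.mem_cons_self a s)) (ih fun i hi => h i (Finset.mem_cons_of_mem hi))

lemma good_sum {t : FF} {ι : Type*} (s : Finset ι) (f g : ι → FF)
    (h : ∀ i ∈ s, Good t (f i) (g i)) :
    Good t (∑ i ∈ s, f i) (∑ i ∈ s, g i) := by
  induction s using Finset.cons_induction with
  | empty => simpa using good_zero t
  | cons a s ha ih =>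
    rw [Finset.sum_cons, Finset.sum_cons]
    exact good_add (h a (Finset.mem_cons_self a s)) (ih fun i hi => h i (Finset.mem_cons_of_mem hi))

lemma good_q₁ (t : FF) : Good t q₁ q₁ := by
  have := good_base t (MvPolynomial.X 0)
  rwa [psi_X, show Subt t 0 = q₁ from rfl] at this

lemma good_q₂ (t : FF) : Good t q₂ q₂ := by
  have := good_base t (MvPolynomial.X 1)
  rwa [psi_X, show Subt t 1 = q₂ from rfl] at this

lemma good_zz (t : FF) (i : ℕ) : Good t (zz i) (Subt t (i + 2)) := by
  have := good_base t (MvPolynomial.X (i + 2))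
  rwa [psi_X] at this

lemma good_K0 (t : FF) {x : FF} (hx : x ∈ K0) : Good t x x := by
  induction hx using Subfield.closure_induction with
  | mem x hx =>
    rcases hx with h | h
    · rw [h]; exact good_q₁ t
    · rw [Set.mem_singleton_iff] at h; rw [h]; exact good_q₂ t
  | one => exact good_one t
  | add x y _ _ hx hy => exact good_add hx hy
  | neg x _ hx => exact good_neg hx
  | inv x _ hx => exact good_inv hx (fun h => h)
  | mul x y _ _ hx hy => exact good_mul hx hy

lemma good_Kx {t : FF} (ht : t ≠ 0) {k : ℕ} {x : FF} (hx : x ∈ Kx k) :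
    ∃ y, Good t x y := by
  induction hx using Subring.closure_induction with
  | mem x hx =>
    rcases hx with (h | h) | h
    · exact ⟨x, good_K0 t h⟩
    · obtain ⟨i, rfl⟩ := h
      exact ⟨Subt t ((i : ℕ) + 2), good_zz t i⟩
    · obtain ⟨i, rfl⟩ := h
      exact ⟨(Subt t ((i : ℕ) + 2))⁻¹, good_inv (good_zz t i) (fun _ => Subt_ne ht _)⟩
  | zero => exact ⟨0, good_zero t⟩
  | one => exact ⟨1, good_one t⟩
  | add x y _ _ hx hy => obtain ⟨a, ha⟩ := hx; obtain ⟨b, hb⟩ := hy; exact ⟨a + b, good_add ha hb⟩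
  | neg x _ hx => obtain ⟨a, ha⟩ := hx; exact ⟨-a, good_neg ha⟩
  | mul x y _ _ hx hy => obtain ⟨a, ha⟩ := hx; obtain ⟨b, hb⟩ := hy; exact ⟨a * b, good_mul ha hb⟩

lemma q₁_mem : q₁ ∈ K0 := Subfield.subset_closure (by simp)
lemma q₂_mem : q₂ ∈ K0 := Subfield.subset_closure (by simp)

lemma zeta_mem (x : FF) (hx : x ∈ K0) : zeta x ∈ K0 := by
  unfold zeta
  exact div_mem (mul_mem (mul_mem (sub_mem (one_mem _) (mul_mem hx q₁_mem))
    (sub_mem (one_mem _) (mul_mem hx q₂_mem)))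
    (sub_mem (one_mem _) (div_mem (mul_mem q₁_mem q₂_mem) hx))) (sub_mem (one_mem _) hx)

def nn2 (m : ℕ) : Fin (m+2) → ℕ := fun i => if i = 0 then 2 else 1

lemma bind_singleton_map {α β : Type*} (l : List α) (f : α → β) :
    (l.flatMap fun a => [f a]) = l.map f := by
  induction l with
  | nil => rfl
  | cons a l ih => simp [ih]

lemma spec_list (m : ℕ) :
    ((List.finRange (m+2)).flatMap fun i => (List.range (nn2 m i)).map fun s => zz i * q₂ ^ s)
    = (zz 0 * q₂ ^ 0) :: (zz 0 * q₂ ^ 1) :: (List.range (m+1)).map (fun r => zz (r+1) * q₂ ^ 0) := by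
  rw [List.finRange_succ, List.flatMap_cons]
  have h0 : nn2 m 0 = 2 := if_pos rfl
  have h1 : ∀ i : Fin (m+1), nn2 m i.succ = 1 := fun i => if_neg (Fin.succ_ne_zero i)
  rw [h0]
  have : ((List.finRange (m+1)).map Fin.succ).flatMap
      (fun i => (List.range (nn2 m i)).map fun s => zz i * q₂ ^ s)
      = (List.finRange (m+1)).flatMap (fun (i : Fin (m+1)) => [zz ((i:ℕ)+1) * q₂ ^ 0]) := by
    rw [List.flatMap_map]
    congr 1
  rw [this, bind_singleton_map]
  have : (List.finRange (m+1)).map (fun i : Fin (m+1) => zz ((i:ℕ)+1) * q₂ ^ 0)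
      = (List.range (m+1)).map (fun r => zz (r+1) * q₂ ^ 0) := by
    rw [← List.map_coe_finRange_eq_range, List.map_map]
    rfl
  rw [this]
  simp [List.range_succ]

lemma spec_val (m : ℕ) (j : Fin (m+3)) :
    specTuple (n := m+3) (m+2) (nn2 m) j =
      if (j:ℕ) = 0 then zz 0 * q₂ ^ 0
      else if (j:ℕ) = 1 then zz 0 * q₂ ^ 1
      else zz ((j:ℕ) - 1) * q₂ ^ 0 := by
  unfold specTuple
  rw [spec_list]
  rcases j with ⟨jv, hj⟩
  match jv with
  | 0 => simp
  | 1 => simp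
  | (r+2) =>
    simp only [List.getD_cons_succ]
    have hr : r < m+1 := by omega
    rw [List.getD_eq_getElem _ _ (by simpa using hr)]
    simp

noncomputable def divisorT (t : FF) (k : ℕ) (nn : Fin k → ℕ) : FF :=
  (∏ i : Fin k, ((1 - q₂) ^ (nn i) *
      ∏ s ∈ Finset.Icc 1 (nn i - 1), zeta (q₂ ^ s) ^ (nn i - s))) *
  ∏ i : Fin k, ∏ j ∈ Finset.univ.filter (fun j : Fin k => i < j),
    ((∏ a ∈ Finset.Icc (1 : ℤ) ((nn i : ℤ) - 1), ∏ b ∈ Finset.Icc (0 : ℤ) ((nn j : ℤ) - 1),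
        (Subt t ((i:ℕ)+2) * q₁ - Subt t ((j:ℕ)+2) * q₂ ^ (b - a))) *
     (∏ a ∈ Finset.Icc (1 : ℤ) ((nn i : ℤ) - 1), ∏ b ∈ Finset.Icc (0 : ℤ) ((nn j : ℤ) - 1),
        (Subt t ((j:ℕ)+2) * q₁ - Subt t ((i:ℕ)+2) * q₂ ^ (a - b - 1))))

lemma good_divisor (t : FF) (k : ℕ) (nn : Fin k → ℕ) :
    Good t (divisor k nn) (divisorT t k nn) := by
  unfold divisor divisorT
  apply good_mul
  · apply good_K0
    apply prod_mem
    intro i _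
    exact mul_mem (pow_mem (sub_mem (one_mem _) q₂_mem) _)
      (prod_mem fun s _ => pow_mem (zeta_mem _ (pow_mem q₂_mem _)) _)
  · apply good_prod
    intro i _
    apply good_prod
    intro j _
    apply good_mul
    · apply good_prod; intro a _; apply good_prod; intro b _
      exact good_sub (good_mul (good_zz t i) (good_q₁ t))
        (good_mul (good_zz t j) (good_zpow (good_q₂ t) q₂_ne _))
    · apply good_prod; intro a _; apply good_prod; intro b _
      exact good_sub (good_mul (good_zz t j) (good_q₁ t))
        (good_mul (good_zz t i) (good_zpow (good_q₂ t) q₂_ne _))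

lemma divisorT_zero {t : FF} (m : ℕ)
    (hz : (Subt t 2 * q₁ - Subt t 3 * q₂ ^ ((0:ℤ) - 1)) *
          (Subt t 3 * q₁ - Subt t 2 * q₂ ^ ((1:ℤ) - 0 - 1)) = 0) :
    divisorT t (m+2) (nn2 m) = 0 := by
  unfold divisorT
  rw [mul_eq_zero]; right
  apply Finset.prod_eq_zero (Finset.mem_univ (0 : Fin (m+2)))
  have h1mem : (1 : Fin (m+2)) ∈ Finset.univ.filter (fun j : Fin (m+2) => 0 < j) := by
    rw [Finset.mem_filter]
    exact ⟨Finset.mem_univ _, Fin.lt_def.mpr (by simp)⟩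
  apply Finset.prod_eq_zero h1mem
  have h0 : nn2 m 0 = 2 := if_pos rfl
  have h1 : nn2 m 1 = 1 := by
    apply if_neg
    simp [Fin.ext_iff]
  rw [h0, h1]
  norm_num
  convert hz using 3 <;> simp

lemma Subt_two (t : FF) : Subt t 2 = zz 0 := rfl
lemma Subt_three (t : FF) : Subt t 3 = t := rfl

lemma nn2_pos (m : ℕ) : ∀ i, 0 < nn2 m i := by
  intro i; unfold nn2; split_ifs <;> norm_num

lemma nn2_anti (m : ℕ) : Antitone (nn2 m) := by
  intro i j hij
  unfold nn2
  by_cases hj : j = 0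
  · have : i = 0 := le_antisymm (hj ▸ hij) (Fin.zero_le i)
    simp [this, hj]
  · rw [if_neg hj]
    split_ifs <;> norm_num

lemma nn2_sum (m : ℕ) : (∑ i, nn2 m i) = m + 3 := by
  rw [Fin.sum_univ_succ]
  have h0 : nn2 m 0 = 2 := if_pos rfl
  have : ∀ i : Fin (m+1), nn2 m i.succ = 1 := fun i => if_neg (Fin.succ_ne_zero i)
  rw [h0, Finset.sum_congr rfl (fun i _ => this i)]
  simp
  omega

lemma key (m : ℕ) (c : (Fin (m+3) → ℤ) →₀ FF)
    (hcoeff : ∀ mo ∈ c.support, c mo ∈ K0)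
    (hdiv : ∀ (k : ℕ) (nn : Fin k → ℕ), (∀ i, 0 < nn i) → Antitone nn →
      (∑ i, nn i) = m + 3 →
      ∃ g ∈ Kx k, evalC c (specTuple k nn) = divisor k nn * g)
    (t : FF) (ht : t ≠ 0)
    (hz : (Subt t 2 * q₁ - Subt t 3 * q₂ ^ ((0:ℤ) - 1)) *
          (Subt t 3 * q₁ - Subt t 2 * q₂ ^ ((1:ℤ) - 0 - 1)) = 0) :
    evalC c (fun j : Fin (m+3) => if (j : ℕ) = 0 then zz 0
      else if (j : ℕ) = 1 then zz 0 * q₂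
      else if (j : ℕ) = 2 then t
      else zz j) = 0 := by
  obtain ⟨g, hg, heq⟩ := hdiv (m+2) (nn2 m) (nn2_pos m) (nn2_anti m) (nn2_sum m)
  obtain ⟨g', hgg⟩ := good_Kx ht hg
  set w : Fin (m+3) → FF := fun j => if (j : ℕ) = 0 then zz 0
      else if (j : ℕ) = 1 then zz 0 * q₂
      else if (j : ℕ) = 2 then t
      else zz j with hw
  have hw_ne : ∀ j, w j ≠ 0 := by
    intro j
    rw [hw]
    dsimp only
    split_ifs
    · exact zz_ne 0
    · exact mul_ne_zero (zz_ne 0) q₂_ne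
    · exact ht
    · exact zz_ne _
  have hgoodv : ∀ j, Good t (specTuple (m+2) (nn2 m) j) (w j) := by
    intro j
    rw [spec_val, hw]
    dsimp only
    rcases j with ⟨jv, hj⟩
    match jv with
    | 0 =>
      simp only [if_pos rfl, pow_zero, mul_one]
      exact Subt_two t ▸ good_zz t 0
    | 1 =>
      norm_num
      exact good_mul (Subt_two t ▸ good_zz t 0) (good_q₂ t)
    | 2 =>
      norm_num
      exact Subt_three t ▸ good_zz t 1
    | (r+3) =>
      have e0 : r + 3 ≠ 0 := by omega
      have e1 : r + 3 ≠ 1 := by omega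
      have e2 : r + 3 ≠ 2 := by omega
      simp only [if_neg e0, if_neg e1, if_neg e2, pow_zero, mul_one]
      have h3 : (r + 3) - 1 = r + 2 := by omega
      rw [h3]
      have : Subt t ((r+2)+2) = zz (r+3) := by simp [Subt]
      exact this ▸ good_zz t (r+2)
  have hL : Good t (evalC c (specTuple (m+2) (nn2 m))) (evalC c w) := by
    unfold evalC
    apply good_sum
    intro mo hmo
    exact good_mul (good_K0 t (hcoeff mo hmo))
      (good_prod _ _ _ fun i _ => good_zpow (hgoodv i) (hw_ne i) _)
  rw [heq] at hL
  have hR : Good t (divisor (m+2) (nn2 m) * g) (divisorT t (m+2) (nn2 m) * g') :=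
    good_mul (good_divisor t _ _) hgg
  have hfin := good_unique hL hR
  rw [hfin, divisorT_zero m hz, zero_mul]


theorem statement9 (n : ℕ) (hn : 3 ≤ n) (c : (Fin n → ℤ) →₀ FF)
    (hcoeff : ∀ m ∈ c.support, c m ∈ K0)
    (hsym : IsSymmC c)
    (hdiv : ∀ (k : ℕ) (nn : Fin k → ℕ), (∀ i, 0 < nn i) → Antitone nn →
      (∑ i, nn i) = n →
      ∃ g ∈ Kx k, evalC c (specTuple k nn) = divisor k nn * g) :
    evalC c (fun j => if (j : ℕ) = 0 then zz 0
      else if (j : ℕ) = 1 then zz 0 * q₂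
      else if (j : ℕ) = 2 then zz 0 * q₁ * q₂
      else zz j) = 0
    ∧ evalC c (fun j => if (j : ℕ) = 0 then zz 0
      else if (j : ℕ) = 1 then zz 0 * q₂
      else if (j : ℕ) = 2 then zz 0 * q₁⁻¹
      else zz j) = 0 := by
  obtain ⟨m, rfl⟩ : ∃ m, n = m + 3 := ⟨n - 3, by omega⟩
  constructor
  · apply key m c hcoeff hdiv (zz 0 * q₁ * q₂)
      (mul_ne_zero (mul_ne_zero (zz_ne 0) q₁_ne) q₂_ne)
    rw [Subt_two, Subt_three]
    have h : zz 0 * q₁ - zz 0 * q₁ * q₂ * q₂ ^ ((0:ℤ) - 1) = 0 := by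
      rw [show ((0:ℤ) - 1) = -1 by norm_num, zpow_neg_one]
      field_simp
      rw [div_self q₂_ne, sub_self, mul_zero]
    rw [h, zero_mul]
  · apply key m c hcoeff hdiv (zz 0 * q₁⁻¹)
      (mul_ne_zero (zz_ne 0) (inv_ne_zero q₁_ne))
    rw [Subt_two, Subt_three]
    have h : zz 0 * q₁⁻¹ * q₁ - zz 0 * q₂ ^ ((1:ℤ) - 0 - 1) = 0 := by
      rw [show ((1:ℤ) - 0 - 1) = 0 by norm_num, zpow_zero, mul_one]
      field_simp
      rw [div_self q₁_ne, sub_self, mul_zero]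
    rw [h, mul_zero]


end
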